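/- In a c-colors graph G with vertices s,t, if (s,t) ∈ E_i for some color i, then there exists a maximum family of internally disjoint uni-color s–t paths containing the single-edge path (s,t) of color i. Hence the maximum colored connectivity of G equals 1 plus the maximum colored connectivity of the graph obtained by deleting the edge (s,t) from E_i. -/

import Mathlib

open SimpleGraph

/-- The internal vertices of a walk from `s` to `t`. -/
def SimpleGraph.Walk.internals {V : Type*} {G : SimpleGraph V} {s t : V}
    (p : G.Walk s t) : Set V :=
  {v | v ∈ p.support ∧ v ≠ s ∧ v ≠ t}

/-- A family of internally disjoint uni-color `s`–`t` paths. -/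
def IsUniFamily {V : Type*} {c : ℕ} (G : Fin c → SimpleGraph V) (s t : V)
    (F : Finset (Σ i : Fin c, (G i).Walk s t)) : Prop :=
  (∀ p ∈ F, p.2.IsPath) ∧
  ∀ p ∈ F, ∀ q ∈ F, p ≠ q → Disjoint p.2.internals q.2.internals

/-- The colored connectivity `κ(s,t)`. -/
noncomputable def kappa {V : Type*} {c : ℕ} (G : Fin c → SimpleGraph V) (s t : V) : ℕ :=
  sSup {n | ∃ F : Finset (Σ i : Fin c, (G i).Walk s t), IsUniFamily G s t F ∧ F.card = n}

/-- A family of internally disjoint `s`–`t` paths in a single graph. -/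
def IsPathFamily {V : Type*} (G : SimpleGraph V) (s t : V) (F : Finset (G.Walk s t)) : Prop :=
  (∀ p ∈ F, p.IsPath) ∧
  ∀ p ∈ F, ∀ q ∈ F, p ≠ q → Disjoint p.internals q.internals

/-- `κ_i(s,t)` in a single graph. -/
noncomputable def kappaI {V : Type*} (G : SimpleGraph V) (s t : V) : ℕ :=
  sSup {n | ∃ F : Finset (G.Walk s t), IsPathFamily G s t F ∧ F.card = n}

/- ---------- auxiliary lemmas ---------- -/

lemma aux_transfer_injective {V : Type*} {G H : SimpleGraph V} {u v : V} :
    ∀ (p q : G.Walk u v) (hp hq), p.transfer H hp = q.transfer H hq → p = q := by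
  intro p
  induction p with
  | nil =>
    intro q hp hq hpq
    cases q with
    | nil => rfl
    | cons a q => simp [SimpleGraph.Walk.transfer] at hpq
  | cons a p ih =>
    intro q hp hq hpq
    cases q with
    | nil => simp only [SimpleGraph.Walk.transfer] at hpq; cases hpq
    | cons b q =>
      simp only [SimpleGraph.Walk.transfer] at hpq
      injection hpq with h1 h2 h3 h4
      subst h2
      simp only [heq_eq_eq] at h4
      have := ih q _ _ h4
      subst this
      rfl

lemma aux_internals_transfer {V : Type*} {G H : SimpleGraph V} {s t : V} (p : G.Walk s t) (hp) :
    (p.transfer H hp).internals = p.internals := by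
  unfold SimpleGraph.Walk.internals
  rw [SimpleGraph.Walk.support_transfer]

lemma aux_path_edge_eq {V : Type*} {G : SimpleGraph V} {s t : V} (hst : s ≠ t) (p : G.Walk s t)
    (hp : p.IsPath) (he : s(s, t) ∈ p.edges) : ∃ h : G.Adj s t, p = .cons h .nil := by
  cases p with
  | nil => exact absurd rfl hst
  | cons a q =>
    rename_i w
    simp only [SimpleGraph.Walk.edges_cons, List.mem_cons] at he
    rw [SimpleGraph.Walk.cons_isPath_iff] at hp
    rcases he with he | he
    · have hw : w = t := by
        rw [Sym2.eq_iff] at he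
        rcases he with ⟨-, h2⟩ | ⟨-, h2⟩
        · exact h2.symm
        · exact absurd h2.symm hst
      subst hw
      rw [SimpleGraph.Walk.isPath_iff_eq_nil] at hp
      exact ⟨a, by rw [hp.1]⟩
    · exact absurd (q.fst_mem_support_of_mem_edges he) hp.2

lemma aux_path_empty_internals {V : Type*} {G : SimpleGraph V} {s t : V} (hst : s ≠ t)
    (p : G.Walk s t) (hp : p.IsPath) (h0 : p.internals = ∅) :
    ∃ h : G.Adj s t, p = .cons h .nil := by
  cases p with
  | nil => exact absurd rfl hst
  | cons a q =>
    rename_i w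
    rw [SimpleGraph.Walk.cons_isPath_iff] at hp
    have hw : w = t := by
      by_contra hwt
      have hws : w ≠ s := fun hws => hp.2 (hws ▸ q.start_mem_support)
      have : w ∈ (SimpleGraph.Walk.cons a q).internals :=
        ⟨by simp [q.start_mem_support], hws, hwt⟩
      rw [h0] at this
      exact this
    subst hw
    rw [SimpleGraph.Walk.isPath_iff_eq_nil] at hp
    exact ⟨a, by rw [hp.1]⟩

lemma aux_uniFamily_bound {V : Type*} [Fintype V] {c : ℕ} (G : Fin c → SimpleGraph V) (s t : V)
    (F : Finset (Σ i : Fin c, (G i).Walk s t)) (hF : IsUniFamily G s t F) :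
    F.card ≤ Fintype.card V + c := by
  classical
  have hsplit := Finset.card_filter_add_card_filter_not
    (s := F) (p := fun p => p.2.internals = ∅)
  set F1 := F.filter (fun p => p.2.internals = ∅) with hF1
  set F2 := F.filter (fun p => ¬ p.2.internals = ∅) with hF2
  have h1 : F1.card ≤ c := by
    have : Set.InjOn Sigma.fst (F1 : Set (Σ i : Fin c, (G i).Walk s t)) := by
      intro p hp q hq hpq
      simp only [hF1, Finset.coe_filter, Set.mem_setOf_eq] at hp hq
      obtain ⟨j1, p⟩ := p
      obtain ⟨j2, q⟩ := q
      simp only at hpq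
      subst hpq
      congr 1
      by_cases hst : s = t
      · subst hst
        rw [(SimpleGraph.Walk.isPath_iff_eq_nil (p := p)).mp (hF.1 _ hp.1),
          (SimpleGraph.Walk.isPath_iff_eq_nil (p := q)).mp (hF.1 _ hq.1)]
      · obtain ⟨a, hap⟩ := aux_path_empty_internals hst p (hF.1 _ hp.1) hp.2
        obtain ⟨b, hbq⟩ := aux_path_empty_internals hst q (hF.1 _ hq.1) hq.2
        rw [hap, hbq]
    calc F1.card ≤ (Finset.univ : Finset (Fin c)).card :=
          Finset.card_le_card_of_injOn Sigma.fst (fun _ _ => Finset.mem_univ _) this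
      _ = c := by simp
  have h2 : F2.card ≤ Fintype.card V := by
    have hne : ∀ p ∈ F2, p.2.internals.Nonempty := by
      intro p hp
      rw [hF2, Finset.mem_filter] at hp
      exact Set.nonempty_iff_ne_empty.mpr hp.2
    set f : (Σ i : Fin c, (G i).Walk s t) → V := fun p =>
      if h : p.2.internals.Nonempty then h.some else s with hf
    have hfmem : ∀ p ∈ F2, f p ∈ p.2.internals := by
      intro p hp
      rw [hf]
      simp only [hne p hp, dif_pos]
      exact (hne p hp).some_mem
    have : Set.InjOn f (F2 : Set (Σ i : Fin c, (G i).Walk s t)) := by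
      intro p hp q hq hpq
      by_contra hne'
      have hd := hF.2 p (Finset.mem_of_mem_filter _ hp) q (Finset.mem_of_mem_filter _ hq) hne'
      exact Set.disjoint_left.mp hd (hfmem p hp) (hpq ▸ hfmem q hq)
    calc F2.card ≤ (Finset.univ : Finset V).card :=
          Finset.card_le_card_of_injOn f (fun _ _ => Finset.mem_univ _) this
      _ = Fintype.card V := by simp
  omega

/-- Transfer a uni-family along a per-edge containment condition. -/
lemma aux_uniFamily_transfer {V : Type*} {c : ℕ} (G H : Fin c → SimpleGraph V) (s t : V)
    (F : Finset (Σ j : Fin c, (G j).Walk s t)) (hF : IsUniFamily G s t F)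
    (hE : ∀ p ∈ F, ∀ ed ∈ p.2.edges, ed ∈ (H p.1).edgeSet) :
    ∃ F' : Finset (Σ j : Fin c, (H j).Walk s t), IsUniFamily H s t F' ∧ F'.card = F.card ∧
      ∀ p' ∈ F', ∃ p ∈ F, p'.1 = p.1 ∧ p'.2.internals = p.2.internals ∧
        p'.2.edges = p.2.edges := by
  classical
  let ψ : {x // x ∈ F} → (Σ j : Fin c, (H j).Walk s t) := fun a =>
    ⟨a.1.1, a.1.2.transfer (H a.1.1) (hE a.1 a.2)⟩
  have hψinj : Set.InjOn ψ (F.attach : Set {x // x ∈ F}) := by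
    rintro ⟨⟨ja, pa⟩, ha⟩ - ⟨⟨jb, pb⟩, hb⟩ - hab
    simp only [ψ] at hab
    have hj : ja = jb := congrArg Sigma.fst hab
    subst hj
    have h2' : pa.transfer (H ja) (hE ⟨ja, pa⟩ ha) = pb.transfer (H ja) (hE ⟨ja, pb⟩ hb) := by
      injection hab
    have := aux_transfer_injective pa pb _ _ h2'
    subst this
    rfl
  refine ⟨F.attach.image ψ, ⟨?_, ?_⟩, ?_, ?_⟩
  · intro p' hp'
    obtain ⟨a, _, rfl⟩ := Finset.mem_image.mp hp'
    exact (hF.1 a.1 a.2).transfer _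
  · intro p' hp' q' hq' hne
    obtain ⟨a, _, rfl⟩ := Finset.mem_image.mp hp'
    obtain ⟨b, _, rfl⟩ := Finset.mem_image.mp hq'
    have hab : a.1 ≠ b.1 := fun hab => hne (congrArg ψ (Subtype.ext hab))
    have := hF.2 a.1 a.2 b.1 b.2 hab
    simpa [ψ, aux_internals_transfer] using this
  · rw [Finset.card_image_of_injOn hψinj, Finset.card_attach]
  · intro p' hp'
    obtain ⟨a, _, rfl⟩ := Finset.mem_image.mp hp'
    exact ⟨a.1, a.2, rfl, aux_internals_transfer _ _, SimpleGraph.Walk.edges_transfer _ _⟩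

/-- if `(s,t) ∈ E_i`, then some maximum family of internally disjoint
uni-color `s`–`t` paths contains the single-edge path `(s,t)` of color `i`, and the colored
connectivity equals `1` plus the colored connectivity after deleting the edge `(s,t)` from
`E_i`. -/
theorem stmt12 {V : Type*} [Fintype V] {c : ℕ} (G : Fin c → SimpleGraph V) (s t : V)
    (i : Fin c) (h : (G i).Adj s t) :
    (∃ F : Finset (Σ j : Fin c, (G j).Walk s t),
      IsUniFamily G s t F ∧ F.card = kappa G s t ∧
      (⟨i, SimpleGraph.Walk.cons h SimpleGraph.Walk.nil⟩ :
        Σ j : Fin c, (G j).Walk s t) ∈ F) ∧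
    kappa G s t =
      1 + kappa (Function.update G i ((G i).deleteEdges {s(s, t)})) s t := by
  classical
  have hst : s ≠ t := h.ne
  set G' := Function.update G i ((G i).deleteEdges {s(s, t)}) with hG'
  have hle : ∀ j, G' j ≤ G j := by
    intro j
    by_cases hj : j = i
    · subst hj; rw [hG', Function.update_self]; exact SimpleGraph.deleteEdges_le _
    · rw [hG', Function.update_of_ne hj]
  set S := {n | ∃ F : Finset (Σ j : Fin c, (G j).Walk s t), IsUniFamily G s t F ∧ F.card = n}
    with hS
  set S' := {n | ∃ F : Finset (Σ j : Fin c, (G' j).Walk s t), IsUniFamily G' s t F ∧ F.card = n}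
    with hS'
  have hkS : kappa G s t = sSup S := rfl
  have hkS' : kappa G' s t = sSup S' := rfl
  have hbddS : BddAbove S :=
    ⟨Fintype.card V + c, fun n hn => by
      obtain ⟨F, hF, hc⟩ := hn; exact hc ▸ aux_uniFamily_bound G s t F hF⟩
  have hbddS' : BddAbove S' :=
    ⟨Fintype.card V + c, fun n hn => by
      obtain ⟨F, hF, hc⟩ := hn; exact hc ▸ aux_uniFamily_bound G' s t F hF⟩
  have hneS : S.Nonempty :=
    ⟨0, ∅, ⟨fun p hp => absurd hp (Finset.notMem_empty p),
      fun p hp => absurd hp (Finset.notMem_empty p)⟩, rfl⟩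
  have hneS' : S'.Nonempty :=
    ⟨0, ∅, ⟨fun p hp => absurd hp (Finset.notMem_empty p),
      fun p hp => absurd hp (Finset.notMem_empty p)⟩, rfl⟩
  obtain ⟨F, hF, hcard⟩ := Nat.sSup_mem hneS hbddS
  obtain ⟨F', hF', hcard'⟩ := Nat.sSup_mem hneS' hbddS'
  set e : Σ j : Fin c, (G j).Walk s t := ⟨i, .cons h .nil⟩ with he
  have heP : (SimpleGraph.Walk.cons h (.nil : (G i).Walk t t)).IsPath := by
    simp [SimpleGraph.Walk.cons_isPath_iff, hst]
  have heI : (SimpleGraph.Walk.cons h (.nil : (G i).Walk t t)).internals = ∅ := by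
    ext v
    simp only [SimpleGraph.Walk.internals, SimpleGraph.Walk.support_cons,
      SimpleGraph.Walk.support_nil, List.mem_cons, List.mem_singleton, Set.mem_setOf_eq,
      Set.mem_empty_iff_false, iff_false]
    rintro ⟨hv, hvs, hvt⟩
    rcases hv with rfl | rfl | h'
    · exact hvs rfl
    · exact hvt rfl
    · exact absurd h' List.not_mem_nil
  -- the one-edge path can be added to any family not containing it
  have hinsert : ∀ D : Finset (Σ j : Fin c, (G j).Walk s t), IsUniFamily G s t D →
      IsUniFamily G s t (insert e D) := by
    intro D hD
    constructor
    · intro p hp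
      rcases Finset.mem_insert.mp hp with rfl | hp
      · exact heP
      · exact hD.1 p hp
    · intro p hp q hq hpq
      rcases Finset.mem_insert.mp hp with rfl | hp <;>
        rcases Finset.mem_insert.mp hq with rfl | hq
      · exact absurd rfl hpq
      · rw [show e.2 = SimpleGraph.Walk.cons h .nil from rfl, heI]
        exact Set.empty_disjoint _
      · rw [show e.2 = SimpleGraph.Walk.cons h .nil from rfl, heI]
        exact (Set.empty_disjoint _).symm
      · exact hD.2 p hp q hq hpq
  have heF : e ∈ F := by
    by_contra heF
    have hmem : F.card + 1 ∈ S :=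
      ⟨insert e F, hinsert F hF, by rw [Finset.card_insert_of_notMem heF]⟩
    have h2 := le_csSup hbddS hmem
    omega
  refine ⟨⟨F, hF, hcard, heF⟩, ?_⟩
  -- (a) : kappa G' + 1 ≤ kappa G
  obtain ⟨F'', hF'', hcard'', htrace⟩ := aux_uniFamily_transfer G' G s t F' hF'
    (fun p hp ed hed => SimpleGraph.edgeSet_mono (hle p.1) (p.2.edges_subset_edgeSet hed))
  have heF'' : e ∉ F'' := by
    intro hmem
    obtain ⟨p, hp, hj, _, hedges⟩ := htrace e hmem
    have hedge : s(s, t) ∈ p.2.edges := by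
      rw [← hedges, show e.2 = SimpleGraph.Walk.cons h .nil from rfl]
      simp
    have := p.2.edges_subset_edgeSet hedge
    rw [← hj] at this
    rw [show e.1 = i from rfl] at this
    rw [hG', Function.update_self, SimpleGraph.edgeSet_deleteEdges] at this
    exact this.2 rfl
  have ha : kappa G' s t + 1 ≤ kappa G s t := by
    have hmem : F'.card + 1 ∈ S :=
      ⟨insert e F'', hinsert F'' hF'', by
        rw [Finset.card_insert_of_notMem heF'', hcard'']⟩
    have h2 := le_csSup hbddS hmem
    rw [hkS, hkS']
    omega
  -- (b) : kappa G - 1 ≤ kappa G'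
  have hEb : ∀ p ∈ F.erase e, ∀ ed ∈ p.2.edges, ed ∈ (G' p.1).edgeSet := by
    intro p hp ed hed
    obtain ⟨jp, pw⟩ := p
    have hpF : (⟨jp, pw⟩ : Σ j : Fin c, (G j).Walk s t) ∈ F := Finset.mem_of_mem_erase hp
    by_cases hj : jp = i
    · subst hj
      have hnedge : s(s, t) ∉ pw.edges := by
        intro hmem
        obtain ⟨a, ha'⟩ := aux_path_edge_eq hst pw (hF.1 _ hpF) hmem
        apply (Finset.mem_erase.mp hp).1
        rw [ha']
      simp only [hG', Function.update_self, SimpleGraph.edgeSet_deleteEdges]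
      exact ⟨pw.edges_subset_edgeSet hed, by
        intro hmem
        rw [Set.mem_singleton_iff] at hmem
        exact hnedge (hmem ▸ hed)⟩
    · rw [hG', Function.update_of_ne hj]
      exact pw.edges_subset_edgeSet hed
  have hFe : IsUniFamily G s t (F.erase e) :=
    ⟨fun p hp => hF.1 p (Finset.mem_of_mem_erase hp),
     fun p hp q hq hpq =>
      hF.2 p (Finset.mem_of_mem_erase hp) q (Finset.mem_of_mem_erase hq) hpq⟩
  obtain ⟨D', hD', hcardD', _⟩ := aux_uniFamily_transfer G G' s t (F.erase e) hFe hEb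
  have hb : kappa G s t - 1 ≤ kappa G' s t := by
    have hmem : F.card - 1 ∈ S' :=
      ⟨D', hD', by rw [hcardD', Finset.card_erase_of_mem heF]⟩
    have h2 := le_csSup hbddS' hmem
    rw [hkS, hkS']
    omega
  have hpos : 1 ≤ kappa G s t := by
    rw [hkS]
    have h2 := Finset.card_pos.mpr ⟨e, heF⟩
    omega
  omega
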